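/- Let ϑ : ℝ → ℝ be differentiable and define E_−(s) = (cos(ϑ(s)/2), sin(ϑ(s)/2)) and E_+(s) = (−sin(ϑ(s)/2), cos(ϑ(s)/2)) in ℂ². Then the counter-diabatic Landau–Zener Hamiltonian satisfies i( |E_−'(s)⟩⟨E_−(s)| + |E_+'(s)⟩⟨E_+(s)| ) = (ϑ'(s)/2) σ_y as 2×2 complex matrices, where E_±' is the componentwise derivative. In particular, if ϑ(s) = ϑ₀ s is linear, this Hamiltonian is the constant matrix (ϑ₀/2)σ_y. -/

import Mathlib

open Matrix Complex

noncomputable def σy : Matrix (Fin 2) (Fin 2) ℂ := !![0, -Complex.I; Complex.I, 0]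

/-- The outer-product matrix `|u⟩⟨v| = u v†`, with entries `u_a · conj(v_b)`. -/
noncomputable def outer (u v : Fin 2 → ℂ) : Matrix (Fin 2) (Fin 2) ℂ :=
  Matrix.of fun a b => u a * (starRingEnd ℂ) (v b)

/-- The counter-diabatic Landau–Zener Hamiltonian satisfies
`i(|E_−'(s)⟩⟨E_−(s)| + |E_+'(s)⟩⟨E_+(s)|) = (ϑ'(s)/2) σ_y`; in particular, for the linear
interpolation `ϑ(s) = ϑ₀ s` it is the constant matrix `(ϑ₀/2) σ_y`. -/
theorem counter_diabatic_landau_zener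
    (ϑ ϑ' : ℝ → ℝ) (hϑ : ∀ s : ℝ, HasDerivAt ϑ (ϑ' s) s)
    (Em Ep Em' Ep' : ℝ → Fin 2 → ℂ)
    (hEm : ∀ s : ℝ, Em s = ![(Real.cos (ϑ s / 2) : ℂ), (Real.sin (ϑ s / 2) : ℂ)])
    (hEp : ∀ s : ℝ, Ep s = ![-(Real.sin (ϑ s / 2) : ℂ), (Real.cos (ϑ s / 2) : ℂ)])
    (hEm' : ∀ (s : ℝ) (i : Fin 2), HasDerivAt (fun u : ℝ => Em u i) (Em' s i) s)
    (hEp' : ∀ (s : ℝ) (i : Fin 2), HasDerivAt (fun u : ℝ => Ep u i) (Ep' s i) s) :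
    (∀ s : ℝ,
      Complex.I • (outer (Em' s) (Em s) + outer (Ep' s) (Ep s))
        = ((ϑ' s / 2 : ℝ) : ℂ) • σy) ∧
    (∀ ϑ₀ : ℝ, (∀ s : ℝ, ϑ s = ϑ₀ * s) →
      ∀ s : ℝ,
        Complex.I • (outer (Em' s) (Em s) + outer (Ep' s) (Ep s))
          = ((ϑ₀ / 2 : ℝ) : ℂ) • σy) := by
  have main : ∀ s : ℝ,
      Complex.I • (outer (Em' s) (Em s) + outer (Ep' s) (Ep s))
        = ((ϑ' s / 2 : ℝ) : ℂ) • σy := by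
    intro s
    have hhalf : HasDerivAt (fun u : ℝ => ϑ u / 2) (ϑ' s / 2) s := (hϑ s).div_const 2
    have hcos : HasDerivAt (fun u : ℝ => ((Real.cos (ϑ u / 2) : ℝ) : ℂ))
        ((-Real.sin (ϑ s / 2) * (ϑ' s / 2) : ℝ) : ℂ) s := hhalf.cos.ofReal_comp
    have hsin : HasDerivAt (fun u : ℝ => ((Real.sin (ϑ u / 2) : ℝ) : ℂ))
        ((Real.cos (ϑ s / 2) * (ϑ' s / 2) : ℝ) : ℂ) s := hhalf.sin.ofReal_comp
    have hm0 : Em' s 0 = ((-Real.sin (ϑ s / 2) * (ϑ' s / 2) : ℝ) : ℂ) := by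
      refine (hEm' s 0).unique ?_
      refine hcos.congr_of_eventuallyEq (Filter.Eventually.of_forall fun u => ?_)
      beta_reduce; rw [hEm u]; simp
    have hm1 : Em' s 1 = ((Real.cos (ϑ s / 2) * (ϑ' s / 2) : ℝ) : ℂ) := by
      refine (hEm' s 1).unique ?_
      refine hsin.congr_of_eventuallyEq (Filter.Eventually.of_forall fun u => ?_)
      beta_reduce; rw [hEm u]; simp
    have hp0 : Ep' s 0 = -((Real.cos (ϑ s / 2) * (ϑ' s / 2) : ℝ) : ℂ) := by
      refine (hEp' s 0).unique ?_
      have : HasDerivAt (fun u : ℝ => -((Real.sin (ϑ u / 2) : ℝ) : ℂ))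
          (-((Real.cos (ϑ s / 2) * (ϑ' s / 2) : ℝ) : ℂ)) s := hsin.neg
      refine this.congr_of_eventuallyEq (Filter.Eventually.of_forall fun u => ?_)
      beta_reduce; rw [hEp u]; simp
    have hp1 : Ep' s 1 = ((-Real.sin (ϑ s / 2) * (ϑ' s / 2) : ℝ) : ℂ) := by
      refine (hEp' s 1).unique ?_
      refine hcos.congr_of_eventuallyEq (Filter.Eventually.of_forall fun u => ?_)
      beta_reduce; rw [hEp u]; simp
    have hsc : ((Real.sin (ϑ s / 2) : ℂ))^2 + ((Real.cos (ϑ s / 2) : ℂ))^2 = 1 := by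
      norm_cast
      exact Real.sin_sq_add_cos_sq _
    ext a b
    fin_cases a <;> fin_cases b <;>
      simp [outer, σy, hEm s, hEp s, hm0, hm1, hp0, hp1, Complex.conj_ofReal,
        -Complex.ofReal_cos, -Complex.ofReal_sin, Complex.ofReal_mul, Complex.ofReal_neg,
        Complex.ofReal_div, Complex.ofReal_ofNat]
    · ring
    · linear_combination (-Complex.I * (ϑ' s : ℂ) / 2) * hsc
    · linear_combination (Complex.I * (ϑ' s : ℂ) / 2) * hsc
    · ring
  refine ⟨main, fun ϑ₀ hlin s => ?_⟩
  have h0 : HasDerivAt ϑ ϑ₀ s := by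
    have : HasDerivAt (fun u : ℝ => ϑ₀ * u) ϑ₀ s := by
      simpa using (hasDerivAt_id s).const_mul ϑ₀
    exact this.congr_of_eventuallyEq (Filter.Eventually.of_forall fun u => hlin u)
  rw [main s, (hϑ s).unique h0]
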